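/- Let R be the Reuleaux triangle of width 1. For every t ∈ [0, 1 − √3/3], the perimeter of the inner parallel set of R at distance t equals (1 − t)(π − 6 α_t(π/6)), i.e. μH¹(frontier R_{-t}) = (1 − t)(π − 6 arcsin(h_t(π/6)/(1−t))), where h_t(γ) = (cos γ − √((1−t)² − sin²γ)) · sin γ. -/

import Mathlib

open MeasureTheory Metric Real Set
open scoped ENNReal

noncomputable section

/-- The Euclidean plane ℝ². -/
abbrev Plane := EuclideanSpace ℝ (Fin 2)

/-- Point of the plane with given coordinates. -/
def pt (a b : ℝ) : Plane := (EuclideanSpace.equiv (Fin 2) ℝ).symm ![a, b]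

/-- A convex body: compact, convex, with nonempty interior. -/
def IsConvexBody (K : Set Plane) : Prop :=
  IsCompact K ∧ Convex ℝ K ∧ (interior K).Nonempty

/-- `K` has constant width 1: in every direction `u` of norm one, the width of `K` is 1. -/
def HasConstantWidth1 (K : Set Plane) : Prop :=
  ∀ u : Plane, ‖u‖ = 1 →
    sSup ((fun x => (inner ℝ x u : ℝ)) '' K) - sInf ((fun x => (inner ℝ x u : ℝ)) '' K) = 1

/-- The Reuleaux triangle of width 1. -/
def ReuleauxTriangle : Set Plane :=
  closedBall (pt 0 0) 1 ∩ closedBall (pt 1 0) 1 ∩ closedBall (pt (1/2) (Real.sqrt 3 / 2)) 1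

/-- The inner parallel set of `Ω` at distance `t`. -/
def innerParallel (Ω : Set Plane) (t : ℝ) : Set Plane :=
  {x : Plane | closedBall x t ⊆ Ω}

/-- The Cheeger constant of `Ω`: infimum of perimeter/area ratios over convex bodies in `Ω`. -/
def cheeger (Ω : Set Plane) : ℝ≥0∞ :=
  ⨅ (E : Set Plane) (_ : IsConvexBody E) (_ : E ⊆ Ω), μH[1] (frontier E) / volume E

/-- The inradius of `K`: supremum of radii of closed balls contained in `K`. -/
def inradius (K : Set Plane) : ℝ :=
  sSup {r : ℝ | 0 ≤ r ∧ ∃ x : Plane, closedBall x r ⊆ K}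


section ReuleauxProof
open Filter
open scoped Topology

@[simp] lemma pt_zero (a b : ℝ) : pt a b 0 = a := rfl
@[simp] lemma pt_one (a b : ℝ) : pt a b 1 = b := rfl

def eC : ℂ ≃ᵢ Plane where
  toFun z := pt z.re z.im
  invFun x := ⟨x 0, x 1⟩
  left_inv z := by simp [pt]
  right_inv x := by ext i; fin_cases i <;> rfl
  isometry_toFun := by
    apply Isometry.of_dist_eq
    intro z w
    rw [EuclideanSpace.dist_eq, Complex.dist_eq, Complex.norm_def, Complex.normSq_apply]
    simp only [Fin.sum_univ_two, pt_zero, pt_one, Complex.sub_re, Complex.sub_im, Real.dist_eq,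
      sq_abs]
    ring_nf

@[simp] lemma eC_apply (z : ℂ) : eC z = pt z.re z.im := rfl



lemma abs_exp_sub_exp (s s' : ℝ) :
    ‖Complex.exp (s * Complex.I) - Complex.exp (s' * Complex.I)‖
      = 2 * |Real.sin ((s - s') / 2)| := by
  have hsq : ‖Complex.exp (s * Complex.I) - Complex.exp (s' * Complex.I)‖ ^ 2
      = (2 * |Real.sin ((s - s') / 2)|) ^ 2 := by
    rw [Complex.sq_norm, Complex.normSq_apply]
    simp only [Complex.exp_mul_I, Complex.add_re, Complex.add_im, Complex.mul_re, Complex.mul_im,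
      Complex.sub_re, Complex.sub_im, Complex.I_re, Complex.I_im, Complex.cos_ofReal_re,
      Complex.sin_ofReal_re, Complex.cos_ofReal_im, Complex.sin_ofReal_im]
    have hh := Real.sin_sq_eq_half_sub ((s - s') / 2)
    rw [show 2 * ((s-s')/2) = s - s' by ring, Real.cos_sub] at hh
    rw [mul_pow, sq_abs]
    nlinarith [Real.sin_sq_add_cos_sq s, Real.sin_sq_add_cos_sq s']
  have h0 := norm_nonneg
    (Complex.exp (s * Complex.I) - Complex.exp (s' * Complex.I))
  have h1 : (0:ℝ) ≤ 2 * |Real.sin ((s - s') / 2)| := by positivity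
  nlinarith [hsq, h0, h1]

lemma chord (z₀ : ℂ) {ρ : ℝ} (hρ : 0 ≤ ρ) (s s' : ℝ) :
    dist (z₀ + ρ * Complex.exp (s * Complex.I)) (z₀ + ρ * Complex.exp (s' * Complex.I))
      = 2 * ρ * |Real.sin ((s - s') / 2)| := by
  rw [Complex.dist_eq]
  have : z₀ + ρ * Complex.exp (s * Complex.I) - (z₀ + ρ * Complex.exp (s' * Complex.I))
      = ρ * (Complex.exp (s * Complex.I) - Complex.exp (s' * Complex.I)) := by ring
  rw [this, norm_mul, abs_exp_sub_exp, Complex.norm_of_nonneg hρ]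
  ring


lemma preconnected_measure_ge {s : Set ℂ} (hs : IsPreconnected s) {x y : ℂ}
    (hx : x ∈ s) (hy : y ∈ s) : ENNReal.ofReal (dist x y) ≤ μH[1] s := by
  rcases eq_or_ne x y with rfl | hxy
  · simp
  set d : ℂ := y - x with hd
  have hd0 : d ≠ 0 := sub_ne_zero.mpr (Ne.symm hxy)
  have hda : 0 < ‖d‖ := by simpa using hd0
  set f : ℂ → ℝ := fun z => ((z - x) * (starRingEnd ℂ) d).re / ‖d‖ with hf
  have hlip : LipschitzWith 1 f := by
    rw [lipschitzWith_iff_dist_le_mul]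
    intro z w
    have : f z - f w = ((z - w) * (starRingEnd ℂ) d).re / ‖d‖ := by
      rw [hf]; rw [div_sub_div_same]; congr 1
      rw [← Complex.sub_re]; congr 1; ring
    rw [Real.dist_eq, this, abs_div, abs_of_pos hda]
    rw [div_le_iff₀ hda, NNReal.coe_one, one_mul, Complex.dist_eq]
    calc |((z - w) * (starRingEnd ℂ) d).re| ≤ ‖(z - w) * (starRingEnd ℂ) d‖ :=
          Complex.abs_re_le_norm _
      _ = ‖z - w‖ * ‖d‖ := by rw [norm_mul, Complex.norm_conj]
  have hfx : f x = 0 := by simp [hf]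
  have hfy : f y = dist x y := by
    rw [hf, dist_comm, Complex.dist_eq, ← hd]
    show (d * (starRingEnd ℂ) d).re / ‖d‖ = ‖d‖
    rw [Complex.mul_conj']
    simp [Complex.normSq_eq_norm_sq, sq, mul_div_assoc, div_self hda.ne']
  have hconn : IsPreconnected (f '' s) := hs.image f hlip.continuous.continuousOn
  have hsub : Icc (0:ℝ) (dist x y) ⊆ f '' s := by
    have h0 : (0:ℝ) ∈ f '' s := ⟨x, hx, hfx⟩
    have h1 : dist x y ∈ f '' s := ⟨y, hy, hfy⟩
    exact hconn.Icc_subset h0 h1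
  calc ENNReal.ofReal (dist x y) = μH[1] (Icc (0:ℝ) (dist x y)) := by
        rw [MeasureTheory.hausdorffMeasure_real, Real.volume_Icc, sub_zero]
    _ ≤ μH[1] (f '' s) := measure_mono hsub
    _ ≤ (1:ℝ≥0∞) ^ (1:ℝ) * μH[1] s := by
        simpa using hlip.hausdorffMeasure_image_le (zero_le_one (α := ℝ)) s
    _ = μH[1] s := by simp


lemma arc_measure (z₀ : ℂ) {ρ a b : ℝ} (hρ : 0 < ρ) (hab : a ≤ b) (hba : b - a ≤ π) :
    μH[1] ((fun θ : ℝ => z₀ + ρ * Complex.exp (θ * Complex.I)) '' Icc a b)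
      = ENNReal.ofReal (ρ * (b - a)) := by
  haveI : NullSingletonClass (μH[1] : Measure ℂ) := Measure.noAtoms_hausdorff ℂ one_pos
  set γ : ℝ → ℂ := fun θ => z₀ + ρ * Complex.exp (θ * Complex.I) with hγ
  have hL0 : 0 ≤ b - a := sub_nonneg.mpr hab
  have hcont : Continuous γ := by
    apply Continuous.add continuous_const
    exact continuous_const.mul (Complex.continuous_exp.comp
      ((Complex.continuous_ofReal.mul continuous_const)))
  have hinj : InjOn γ (Icc a b) := by
    intro s hs s' hs' hss
    have hd : dist (γ s) (γ s') = 0 := by rw [hss, dist_self]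
    rw [hγ] at hd
    simp only at hd
    rw [chord z₀ hρ.le] at hd
    have hsin : Real.sin ((s - s') / 2) = 0 := by
      have h := abs_nonneg (Real.sin ((s - s') / 2))
      have h' : |Real.sin ((s - s') / 2)| = 0 := by nlinarith
      exact abs_eq_zero.mp h'
    have hb1 : -π < (s - s') / 2 := by
      have h1 := hs.1; have h2 := hs.2; have h3 := hs'.1; have h4 := hs'.2
      have := Real.pi_pos; linarith
    have hb2 : (s - s') / 2 < π := by
      have h1 := hs.1; have h2 := hs.2; have h3 := hs'.1; have h4 := hs'.2
      have := Real.pi_pos; linarith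
    have := (Real.sin_eq_zero_iff_of_lt_of_lt hb1 hb2).mp hsin
    linarith
  -- Upper bound
  have hupper : μH[1] (γ '' Icc a b) ≤ ENNReal.ofReal (ρ * (b - a)) := by
    have hlip : LipschitzOnWith ρ.toNNReal γ (Icc a b) := by
      rw [lipschitzOnWith_iff_dist_le_mul]
      intro s hs s' hs'
      rw [hγ]
      simp only
      rw [chord z₀ hρ.le, Real.coe_toNNReal _ hρ.le, Real.dist_eq]
      have h1 : |Real.sin ((s - s') / 2)| ≤ |(s - s') / 2| := Real.abs_sin_le_abs
      have h2 : |(s-s')/2| = |s - s'|/2 := by rw [abs_div]; norm_num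
      nlinarith [abs_nonneg (s - s')]
    calc μH[1] (γ '' Icc a b) ≤ (ρ.toNNReal : ℝ≥0∞) ^ (1:ℝ) * μH[1] (Icc a b) :=
          hlip.hausdorffMeasure_image_le zero_le_one
      _ = ENNReal.ofReal ρ * ENNReal.ofReal (b - a) := by
          rw [ENNReal.rpow_one, MeasureTheory.hausdorffMeasure_real, Real.volume_Icc]
          rfl
      _ = ENNReal.ofReal (ρ * (b - a)) := (ENNReal.ofReal_mul hρ.le).symm
  -- Lower bound
  have hlower : ENNReal.ofReal (ρ * (b - a)) ≤ μH[1] (γ '' Icc a b) := by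
    rcases eq_or_lt_of_le hL0 with hL0' | hLpos
    · rw [← hL0', mul_zero, ENNReal.ofReal_zero]; exact zero_le
    have key : ∀ n : ℕ, 0 < n →
        ENNReal.ofReal ((n:ℝ) * (2 * ρ * Real.sin ((b - a) / (2 * n)))) ≤ μH[1] (γ '' Icc a b) := by
      intro n hn
      have hn0 : (0:ℝ) < n := by exact_mod_cast hn
      set h : ℝ := (b - a) / n with hh
      have hhpos : 0 < h := div_pos hLpos hn0
      set tt : ℕ → ℝ := fun j => a + j * h with htt
      have htt_mem : ∀ j : ℕ, j ≤ n → tt j ∈ Icc a b := by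
        intro j hj
        have hj' : (j:ℝ) ≤ n := by exact_mod_cast hj
        constructor
        · simp only [htt]; nlinarith
        · simp only [htt]
          have : (j:ℝ) * h ≤ (n:ℝ) * h := by nlinarith
          have hnh : (n:ℝ) * h = b - a := by rw [hh]; field_simp
          linarith
      have htt_lt : ∀ j : ℕ, tt j < tt (j+1) := by
        intro j; simp only [htt]; push_cast; nlinarith
      set P : ℕ → Set ℂ := fun j => γ '' Ico (tt j) (tt (j+1)) with hP
      have hIccsub : ∀ j : ℕ, j < n → Icc (tt j) (tt (j+1)) ⊆ Icc a b := by
        intro j hj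
        exact Icc_subset_Icc (htt_mem j hj.le).1 (htt_mem (j+1) hj).2
      have hPeq : ∀ j : ℕ, j < n → P j = γ '' Icc (tt j) (tt (j+1)) \ {γ (tt (j+1))} := by
        intro j hj
        ext x
        constructor
        · rintro ⟨s, hs, rfl⟩
          refine ⟨⟨s, Ico_subset_Icc_self hs, rfl⟩, ?_⟩
          simp only [mem_singleton_iff]
          intro hcon
          have := hinj (hIccsub j hj (Ico_subset_Icc_self hs))
            (hIccsub j hj (right_mem_Icc.mpr (htt_lt j).le)) hcon
          exact absurd this (ne_of_lt hs.2)
        · rintro ⟨⟨s, hs, rfl⟩, hne⟩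
          refine ⟨s, ⟨hs.1, lt_of_le_of_ne hs.2 ?_⟩, rfl⟩
          intro hcon
          exact hne (by rw [hcon]; exact mem_singleton _)
      have hPmeas : ∀ j ∈ Finset.range n, MeasurableSet (P j) := by
        intro j hj
        rw [hPeq j (Finset.mem_range.mp hj)]
        exact ((isCompact_Icc.image hcont).measurableSet).diff (measurableSet_singleton _)
      have hPdisj : (↑(Finset.range n) : Set ℕ).PairwiseDisjoint P := by
        intro i hi j hj hij
        simp only [Finset.coe_range, mem_Iio] at hi hj
        refine Set.disjoint_left.mpr ?_
        rintro x ⟨s, hs, rfl⟩ ⟨s', hs', hss⟩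
        have heq := hinj (hIccsub j hj (Ico_subset_Icc_self hs'))
          (hIccsub i hi (Ico_subset_Icc_self hs)) hss
        subst heq
        -- s ∈ Ico i and Ico j with i ≠ j: contradiction
        rcases lt_or_gt_of_ne hij with hlt | hlt
        · have : tt (i+1) ≤ tt j := by
            have : (i:ℝ) + 1 ≤ j := by exact_mod_cast hlt
            simp only [htt]; push_cast; nlinarith
          linarith [hs.2, hs'.1]
        · have : tt (j+1) ≤ tt i := by
            have : (j:ℝ) + 1 ≤ i := by exact_mod_cast hlt
            simp only [htt]; push_cast; nlinarith
          linarith [hs.1, hs'.2]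
      have hPsub : (⋃ j ∈ Finset.range n, P j) ⊆ γ '' Icc a b := by
        intro x hx
        simp only [mem_iUnion] at hx
        rcases hx with ⟨j, hj, hxj⟩
        rcases hxj with ⟨s, hs, rfl⟩
        exact ⟨s, hIccsub j (Finset.mem_range.mp hj) (Ico_subset_Icc_self hs), rfl⟩
      have hPlow : ∀ j : ℕ, j < n →
          ENNReal.ofReal (2 * ρ * Real.sin ((b - a) / (2 * n))) ≤ μH[1] (P j) := by
        intro j hj
        have hmeq : μH[1] (P j) = μH[1] (γ '' Icc (tt j) (tt (j+1))) := by
          rw [hPeq j hj]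
          rw [measure_diff_null (measure_singleton _)]
        rw [hmeq]
        have hconn : IsPreconnected (γ '' Icc (tt j) (tt (j+1))) :=
          (isPreconnected_Icc).image γ hcont.continuousOn
        have hx : γ (tt j) ∈ γ '' Icc (tt j) (tt (j+1)) :=
          mem_image_of_mem γ (left_mem_Icc.mpr (htt_lt j).le)
        have hy : γ (tt (j+1)) ∈ γ '' Icc (tt j) (tt (j+1)) :=
          mem_image_of_mem γ (right_mem_Icc.mpr (htt_lt j).le)
        have hdist : dist (γ (tt j)) (γ (tt (j+1))) = 2 * ρ * Real.sin ((b - a) / (2 * n)) := by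
          rw [hγ]
          simp only
          rw [chord z₀ hρ.le]
          have h1 : tt j - tt (j+1) = -h := by simp only [htt]; push_cast; ring
          rw [h1]
          rw [neg_div, Real.sin_neg, abs_neg]
          have h3 : h / 2 = (b - a) / (2 * n) := by rw [hh]; ring
          rw [h3, abs_of_nonneg]
          apply Real.sin_nonneg_of_nonneg_of_le_pi
          · positivity
          · have h4 : (1:ℝ) ≤ 2 * n := by
              have : (1:ℝ) ≤ (n:ℝ) := by exact_mod_cast hn
              linarith
            have := div_le_self hL0 h4
            linarith
        rw [← hdist]
        exact preconnected_measure_ge hconn hx hy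
      calc ENNReal.ofReal ((n:ℝ) * (2 * ρ * Real.sin ((b - a) / (2 * n))))
          = ∑ _j ∈ Finset.range n, ENNReal.ofReal (2 * ρ * Real.sin ((b - a) / (2 * n))) := by
            rw [Finset.sum_const, Finset.card_range, nsmul_eq_mul,
              ← ENNReal.ofReal_natCast n, ← ENNReal.ofReal_mul (by positivity)]
        _ ≤ ∑ j ∈ Finset.range n, μH[1] (P j) :=
            Finset.sum_le_sum fun j hj => hPlow j (Finset.mem_range.mp hj)
        _ = μH[1] (⋃ j ∈ Finset.range n, P j) :=
            (measure_biUnion_finset hPdisj hPmeas).symm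
        _ ≤ μH[1] (γ '' Icc a b) := measure_mono hPsub
    -- take limit n → ∞
    have hlim : Tendsto (fun n : ℕ => ENNReal.ofReal ((n:ℝ) * (2 * ρ * Real.sin ((b - a) / (2 * n)))))
        atTop (𝓝 (ENNReal.ofReal (ρ * (b - a)))) := by
      apply ENNReal.tendsto_ofReal
      have hslope : Tendsto (fun x : ℝ => Real.sin x / x) (nhdsWithin 0 {0}ᶜ) (𝓝 1) := by
        have hderiv : HasDerivAt Real.sin 1 0 := by simpa using Real.hasDerivAt_sin 0
        have := hasDerivAt_iff_tendsto_slope.mp hderiv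
        refine this.congr' ?_
        filter_upwards [self_mem_nhdsWithin] with x hx
        simp [slope_def_field]
      have hu : Tendsto (fun n : ℕ => (b - a) / (2 * n)) atTop (nhdsWithin 0 {0}ᶜ) := by
        rw [tendsto_nhdsWithin_iff]
        constructor
        · have : (fun n : ℕ => (b - a) / (2 * n)) = fun n : ℕ => ((b-a)/2) / n := by
            funext n; rcases Nat.eq_zero_or_pos n with rfl | hn
            · simp
            · field_simp
          rw [this]
          exact tendsto_const_div_atTop_nhds_zero_nat _
        · filter_upwards [eventually_ge_atTop 1] with n hn
          have hn0 : (0:ℝ) < n := by exact_mod_cast hn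
          simp only [mem_compl_iff, mem_singleton_iff]
          positivity
      have hcomp : Tendsto (fun n : ℕ => Real.sin ((b-a)/(2*n)) / ((b-a)/(2*n))) atTop (𝓝 1) :=
        hslope.comp hu
      have := hcomp.const_mul (ρ * (b - a))
      rw [mul_one] at this
      refine this.congr' ?_
      filter_upwards [eventually_ge_atTop 1] with n hn
      have hn0 : (0:ℝ) < n := by exact_mod_cast hn
      have hx : (b - a) / (2 * n) ≠ 0 := by positivity
      field_simp
    exact le_of_tendsto hlim (eventually_atTop.mpr ⟨1, fun n hn => key n hn⟩)
  exact le_antisymm hupper hlower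




def zC : ℂ := ⟨1/2, Real.sqrt 3 / 2⟩

lemma arccos_antitone : Antitone Real.arccos := by
  intro x y hxy
  rw [Real.arccos, Real.arccos]
  have := Real.monotone_arcsin hxy
  linarith

lemma sqrt3_pos : (0:ℝ) < Real.sqrt 3 := Real.sqrt_pos.mpr (by norm_num)
lemma sqrt3_sq : Real.sqrt 3 * Real.sqrt 3 = 3 := Real.mul_self_sqrt (by norm_num)
lemma sqrt3_lt2 : Real.sqrt 3 < 2 := by nlinarith [sqrt3_pos, sqrt3_sq, Real.sq_sqrt (show (0:ℝ) ≤ 3 by norm_num)]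
lemma sqrt3_gt1 : 1 < Real.sqrt 3 := by nlinarith [sqrt3_pos, sqrt3_sq]

section arcs
variable {ρ : ℝ} (hρ : Real.sqrt 3 / 3 ≤ ρ)

lemma rho_pos (hρ : Real.sqrt 3 / 3 ≤ ρ) : 0 < ρ := lt_of_lt_of_le (by positivity) hρ
lemma rho_half (hρ : Real.sqrt 3 / 3 ≤ ρ) : 1/2 < ρ := by nlinarith [sqrt3_gt1, sqrt3_pos, sqrt3_sq]
lemma inv2rho_mem (hρ : Real.sqrt 3 / 3 ≤ ρ) : 0 < 1/(2*ρ) ∧ 1/(2*ρ) ≤ Real.sqrt 3/2 := by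
  have h0 := rho_pos hρ
  constructor
  · positivity
  · rw [div_le_div_iff₀ (by positivity) (by norm_num)]
    have h := mul_le_mul_of_nonneg_left hρ (le_of_lt sqrt3_pos)
    nlinarith [sqrt3_sq]

/-- the half-angle -/
def cAng (ρ : ℝ) : ℝ := Real.arccos (1/(2*ρ))

lemma cos_cAng (hρ : Real.sqrt 3 / 3 ≤ ρ) : Real.cos (cAng ρ) = 1/(2*ρ) := by
  obtain ⟨h1, h2⟩ := inv2rho_mem hρ
  have hb1 : (-1:ℝ) ≤ 1/(2*ρ) := by linarith
  have hb2 : 1/(2*ρ) ≤ 1 := by nlinarith [sqrt3_lt2]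
  exact Real.cos_arccos hb1 hb2

lemma cAng_lt_half_pi (hρ : Real.sqrt 3 / 3 ≤ ρ) : cAng ρ < π/2 := by
  obtain ⟨h1, h2⟩ := inv2rho_mem hρ
  have : Real.arccos (1/(2*ρ)) < Real.arccos 0 := by
    exact Real.strictAntiOn_arccos (Set.mem_Icc.mpr (by norm_num))
      (Set.mem_Icc.mpr ⟨by linarith, by nlinarith [sqrt3_lt2]⟩) h1
  rwa [Real.arccos_zero] at this

lemma cAng_ge (hρ : Real.sqrt 3 / 3 ≤ ρ) : π/6 ≤ cAng ρ := by
  obtain ⟨h1, h2⟩ := inv2rho_mem hρ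
  have h := arccos_antitone h2
  rwa [show Real.arccos (Real.sqrt 3/2) = π/6 by
    rw [← Real.cos_pi_div_six]; exact Real.arccos_cos (by positivity) (by linarith [Real.pi_pos])] at h

lemma cAng_nonneg : 0 ≤ cAng ρ := Real.arccos_nonneg _

-- membership characterizations
lemma mem_cb_one (hρ : Real.sqrt 3 / 3 ≤ ρ) (φ : ℝ) :
    (ρ : ℂ) * Complex.exp (φ * Complex.I) ∈ closedBall (1:ℂ) ρ ↔ 1 ≤ 2*ρ*Real.cos φ := by
  have h0 := rho_pos hρ
  rw [mem_closedBall, Complex.dist_eq]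
  have hns : Complex.normSq ((ρ:ℂ) * Complex.exp (φ * Complex.I) - 1)
      = ρ^2 - 2*ρ*Real.cos φ + 1 := by
    rw [Complex.normSq_apply]
    simp [Complex.exp_mul_I, Complex.mul_re, Complex.mul_im, Complex.cos_ofReal_re,
      Complex.sin_ofReal_re]
    nlinarith [Real.sin_sq_add_cos_sq φ]
  constructor
  · intro h
    have := Complex.sq_norm ((ρ:ℂ) * Complex.exp (φ * Complex.I) - 1)
    nlinarith [norm_nonneg ((ρ:ℂ) * Complex.exp (φ * Complex.I) - 1)]
  · intro h
    have hsq := Complex.sq_norm ((ρ:ℂ) * Complex.exp (φ * Complex.I) - 1)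
    nlinarith [norm_nonneg ((ρ:ℂ) * Complex.exp (φ * Complex.I) - 1)]

lemma mem_cb_zC (hρ : Real.sqrt 3 / 3 ≤ ρ) (φ : ℝ) :
    (ρ : ℂ) * Complex.exp (φ * Complex.I) ∈ closedBall zC ρ ↔ 1 ≤ 2*ρ*Real.cos (φ - π/3) := by
  have h0 := rho_pos hρ
  rw [mem_closedBall, Complex.dist_eq]
  have hcos : 2*Real.cos (φ - π/3) = Real.cos φ + Real.sqrt 3 * Real.sin φ := by
    rw [Real.cos_sub, Real.cos_pi_div_three, Real.sin_pi_div_three]; ring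
  have hns : Complex.normSq ((ρ:ℂ) * Complex.exp (φ * Complex.I) - zC)
      = ρ^2 - ρ*(Real.cos φ + Real.sqrt 3 * Real.sin φ) + 1 := by
    rw [Complex.normSq_apply]
    simp [Complex.exp_mul_I, Complex.mul_re, Complex.mul_im, zC, Complex.cos_ofReal_re,
      Complex.sin_ofReal_re]
    nlinarith [Real.sin_sq_add_cos_sq φ, sqrt3_sq]
  constructor
  · intro h
    have hsq := Complex.sq_norm ((ρ:ℂ) * Complex.exp (φ * Complex.I) - zC)
    nlinarith [norm_nonneg ((ρ:ℂ) * Complex.exp (φ * Complex.I) - zC)]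
  · intro h
    have hsq := Complex.sq_norm ((ρ:ℂ) * Complex.exp (φ * Complex.I) - zC)
    nlinarith [norm_nonneg ((ρ:ℂ) * Complex.exp (φ * Complex.I) - zC)]

lemma cos_ge_of_abs_le {x c : ℝ} (hc : c ≤ π) (hx : |x| ≤ c) : Real.cos c ≤ Real.cos x := by
  rw [← Real.cos_abs x]
  exact Real.cos_le_cos_of_nonneg_of_le_pi (abs_nonneg x) hc hx

-- |x| ≤ arccos y  from  cos x ≥ y, |x| ≤ π
lemma abs_le_arccos {x y : ℝ} (hx : |x| ≤ π) (h : y ≤ Real.cos x) : |x| ≤ Real.arccos y := by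
  have h1 : |x| = Real.arccos (Real.cos x) := by
    rw [← Real.cos_abs x]
    exact (Real.arccos_cos (abs_nonneg x) hx).symm
  rw [h1]
  exact arccos_antitone h

lemma arcA (hρ : Real.sqrt 3 / 3 ≤ ρ) :
    sphere (0:ℂ) ρ ∩ closedBall 1 ρ ∩ closedBall zC ρ
      = (fun θ : ℝ => (0:ℂ) + ρ * Complex.exp (θ * Complex.I)) '' Icc (π/3 - cAng ρ) (cAng ρ) := by
  have h0 := rho_pos hρ
  have hc6 := cAng_ge hρ
  have hc2 := cAng_lt_half_pi hρ
  have hcc := cos_cAng hρ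
  have hpi := Real.pi_pos
  ext x
  simp only [mem_inter_iff, mem_sphere_iff_norm, mem_image, zero_add]
  constructor
  · rintro ⟨⟨hx1, hx2⟩, hx3⟩
    have habs : ‖x‖ = ρ := by rwa [← sub_zero x]
    set φ := Complex.arg x with hφ
    have hxeq : (ρ:ℂ) * Complex.exp (φ * Complex.I) = x := by
      rw [← habs]; exact Complex.norm_mul_exp_arg_mul_I x
    have hb : 1 ≤ 2*ρ*Real.cos φ := (mem_cb_one hρ φ).mp (by rw [hxeq]; exact hx2)
    have hbc : 1 ≤ 2*ρ*Real.cos (φ - π/3) := (mem_cb_zC hρ φ).mp (by rw [hxeq]; exact hx3)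
    have hφ1 : |φ| ≤ π := abs_le.mpr ⟨(Complex.neg_pi_lt_arg x).le, Complex.arg_le_pi x⟩
    have hcosφ : 1/(2*ρ) ≤ Real.cos φ := by rw [div_le_iff₀ (by positivity)]; nlinarith
    have habs1 : |φ| ≤ cAng ρ := abs_le_arccos hφ1 hcosφ
    have hφ2 : |φ - π/3| ≤ π := by
      rw [abs_le] at habs1 ⊢
      constructor <;> nlinarith
    have hcosφ2 : 1/(2*ρ) ≤ Real.cos (φ - π/3) := by
      rw [div_le_iff₀ (by positivity)]; nlinarith
    have habs2 : |φ - π/3| ≤ cAng ρ := abs_le_arccos hφ2 hcosφ2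
    refine ⟨φ, ⟨?_, ?_⟩, hxeq⟩
    · rw [abs_le] at habs2; linarith [habs2.1]
    · rw [abs_le] at habs1; exact habs1.2
  · rintro ⟨φ, ⟨hφ1, hφ2⟩, rfl⟩
    have habs1 : |φ| ≤ cAng ρ := abs_le.mpr ⟨by linarith, hφ2⟩
    have habs2 : |φ - π/3| ≤ cAng ρ := abs_le.mpr ⟨by linarith, by linarith⟩
    have hcos1 : 1/(2*ρ) ≤ Real.cos φ := by
      rw [← hcc]; exact cos_ge_of_abs_le (by linarith) habs1
    have hcos2 : 1/(2*ρ) ≤ Real.cos (φ - π/3) := by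
      rw [← hcc]; exact cos_ge_of_abs_le (by linarith) habs2
    refine ⟨⟨?_, ?_⟩, ?_⟩
    · rw [sub_zero, norm_mul,
        Complex.norm_exp_ofReal_mul_I, mul_one, Complex.norm_of_nonneg h0.le]
    · rw [mem_cb_one hρ]
      rw [div_le_iff₀ (by positivity)] at hcos1; nlinarith
    · rw [mem_cb_zC hρ]
      rw [div_le_iff₀ (by positivity)] at hcos2; nlinarith
end arcs





-- rotation by 2π/3 mapping 0 → 1 → zC → 0
def ω : ℂ := ⟨-(1/2), Real.sqrt 3 / 2⟩

lemma normSq_ω : Complex.normSq ω = 1 := by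
  rw [Complex.normSq_apply]; simp [ω]; nlinarith [sqrt3_sq]

def rot : ℂ ≃ᵢ ℂ where
  toFun z := ω * z + 1
  invFun z := (starRingEnd ℂ) ω * (z - 1)
  left_inv z := by
    show (starRingEnd ℂ) ω * (ω * z + 1 - 1) = z
    simp only [add_sub_cancel_right, ← mul_assoc]
    rw [mul_comm ((starRingEnd ℂ) ω) ω, Complex.mul_conj, normSq_ω]
    simp
  right_inv z := by
    show ω * ((starRingEnd ℂ) ω * (z - 1)) + 1 = z
    have h : ω * ((starRingEnd ℂ) ω * (z - 1)) + 1 = (ω * (starRingEnd ℂ) ω) * (z - 1) + 1 := by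
      ring
    rw [h, Complex.mul_conj, normSq_ω]
    simp
  isometry_toFun := by
    apply Isometry.of_dist_eq
    intro z w
    simp only [Complex.dist_eq]
    have : ω * z + 1 - (ω * w + 1) = ω * (z - w) := by ring
    rw [this, norm_mul]
    have habs : ‖ω‖ = 1 := by
      have := Complex.sq_norm ω
      rw [normSq_ω] at this
      nlinarith [norm_nonneg ω]
    rw [habs, one_mul]

lemma rot_zero : rot 0 = 1 := by simp [rot]
lemma rot_one : rot 1 = zC := by
  show ω * 1 + 1 = zC
  · apply Complex.ext <;> simp [ω, zC] <;> norm_num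
lemma rot_zC : rot zC = 0 := by
  show ω * zC + 1 = 0
  apply Complex.ext <;> simp [ω, zC, Complex.mul_re, Complex.mul_im] <;> nlinarith [sqrt3_sq]

section main
variable {ρ : ℝ}

def Kc (ρ : ℝ) : Set ℂ := closedBall 0 ρ ∩ closedBall 1 ρ ∩ closedBall zC ρ

def S1 (ρ : ℝ) : Set ℂ := sphere (0:ℂ) ρ ∩ closedBall 1 ρ ∩ closedBall zC ρ
def S2 (ρ : ℝ) : Set ℂ := sphere (1:ℂ) ρ ∩ closedBall zC ρ ∩ closedBall 0 ρ
def S3 (ρ : ℝ) : Set ℂ := sphere zC ρ ∩ closedBall 0 ρ ∩ closedBall 1 ρ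

lemma rot_S1 : rot '' S1 ρ = S2 ρ := by
  rw [S1, S2, Set.image_inter rot.injective, Set.image_inter rot.injective,
    rot.image_sphere, rot.image_closedBall, rot.image_closedBall, rot_zero, rot_one, rot_zC]

lemma rot_S2 : rot '' S2 ρ = S3 ρ := by
  rw [S2, S3, Set.image_inter rot.injective, Set.image_inter rot.injective,
    rot.image_sphere, rot.image_closedBall, rot.image_closedBall, rot_zero, rot_one, rot_zC]

lemma frontier_Kc (hρ : 0 < ρ) : frontier (Kc ρ) = S1 ρ ∪ S2 ρ ∪ S3 ρ := by
  have hcl : IsClosed (Kc ρ) :=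
    ((isClosed_closedBall.inter isClosed_closedBall).inter isClosed_closedBall)
  have hint : interior (Kc ρ) = ball 0 ρ ∩ ball 1 ρ ∩ ball zC ρ := by
    rw [Kc, interior_inter, interior_inter, interior_closedBall _ hρ.ne',
      interior_closedBall _ hρ.ne', interior_closedBall _ hρ.ne']
  rw [hcl.frontier_eq, hint]
  ext x
  simp only [Kc, S1, S2, S3, mem_diff, mem_inter_iff, mem_union, mem_closedBall, mem_ball,
    mem_sphere]
  constructor
  · rintro ⟨⟨⟨h1, h2⟩, h3⟩, hn⟩
    rcases lt_or_eq_of_le h1 with h1' | h1'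
    · rcases lt_or_eq_of_le h2 with h2' | h2'
      · rcases lt_or_eq_of_le h3 with h3' | h3'
        · exact absurd ⟨⟨h1', h2'⟩, h3'⟩ hn
        · exact Or.inr ⟨⟨h3', h1⟩, h2⟩
      · exact Or.inl (Or.inr ⟨⟨h2', h3⟩, h1⟩)
    · exact Or.inl (Or.inl ⟨⟨h1', h2⟩, h3⟩)
  · rintro ((⟨⟨h1, h2⟩, h3⟩ | ⟨⟨h1, h2⟩, h3⟩) | ⟨⟨h1, h2⟩, h3⟩)
    · exact ⟨⟨⟨h1.le, h2⟩, h3⟩, fun hc => absurd h1 (ne_of_lt hc.1.1)⟩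
    · exact ⟨⟨⟨h3, h1.le⟩, h2⟩, fun hc => absurd h1 (ne_of_lt hc.1.2)⟩
    · exact ⟨⟨⟨h2, h3⟩, h1.le⟩, fun hc => absurd h1 (ne_of_lt hc.2)⟩

lemma sphere01_finite : (sphere (0:ℂ) ρ ∩ sphere (1:ℂ) ρ).Finite := by
  apply Set.Finite.subset
    (s := ({⟨1/2, Real.sqrt (ρ^2 - 1/4)⟩, ⟨1/2, -Real.sqrt (ρ^2 - 1/4)⟩} : Set ℂ))
    (Set.toFinite _)
  rintro x ⟨hx1, hx2⟩
  rw [mem_sphere, Complex.dist_eq] at hx1 hx2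
  have h1 : Complex.normSq x = ρ^2 := by
    have := congrArg (fun y => y^2) hx1
    simpa [Complex.sq_norm] using this
  have h2 : Complex.normSq (x - 1) = ρ^2 := by
    have := congrArg (fun y => y^2) hx2
    simpa [Complex.sq_norm] using this
  rw [Complex.normSq_apply] at h1 h2
  simp only [Complex.sub_re, Complex.sub_im, Complex.one_re, Complex.one_im, sub_zero] at h2
  have hre : x.re = 1/2 := by nlinarith
  have him : x.im^2 = ρ^2 - 1/4 := by nlinarith
  have habs : |x.im| = Real.sqrt (ρ^2 - 1/4) := by
    rw [← Real.sqrt_sq_eq_abs, him]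
  rcases abs_eq (Real.sqrt_nonneg (ρ^2-1/4)) |>.mp habs with h | h
  · left
    apply Complex.ext
    · show x.re = 1/2
      exact hre
    · show x.im = Real.sqrt (ρ^2 - 1/4)
      exact h
  · right
    rw [mem_singleton_iff]
    apply Complex.ext
    · show x.re = 1/2
      exact hre
    · show x.im = -Real.sqrt (ρ^2 - 1/4)
      exact h

lemma null_inter_12 : μH[1] (sphere (0:ℂ) ρ ∩ sphere (1:ℂ) ρ) = 0 := by
  haveI : NullSingletonClass (μH[1] : Measure ℂ) := Measure.noAtoms_hausdorff ℂ one_pos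
  exact (sphere01_finite).countable.measure_zero _

lemma null_inter_23 : μH[1] (sphere (1:ℂ) ρ ∩ sphere zC ρ) = 0 := by
  have him : sphere (1:ℂ) ρ ∩ sphere zC ρ = rot '' (sphere (0:ℂ) ρ ∩ sphere (1:ℂ) ρ) := by
    rw [Set.image_inter rot.injective, rot.image_sphere, rot.image_sphere, rot_zero, rot_one]
  rw [him, rot.hausdorffMeasure_image]
  exact null_inter_12

lemma null_inter_31 : μH[1] (sphere zC ρ ∩ sphere (0:ℂ) ρ) = 0 := by
  have him : sphere zC ρ ∩ sphere (0:ℂ) ρ = rot '' (sphere (1:ℂ) ρ ∩ sphere zC ρ) := by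
    rw [Set.image_inter rot.injective, rot.image_sphere, rot.image_sphere, rot_one, rot_zC]
  rw [him, rot.hausdorffMeasure_image]
  exact null_inter_23

lemma measure_union_S (hρ : 0 < ρ) :
    μH[1] (S1 ρ ∪ S2 ρ ∪ S3 ρ) = μH[1] (S1 ρ) + μH[1] (S2 ρ) + μH[1] (S3 ρ) := by
  have hmeas : ∀ (z : ℂ), IsClosed (sphere z ρ) := fun z => isClosed_sphere
  have hm1 : NullMeasurableSet (S2 ρ) (μH[1]) :=
    ((isClosed_sphere.inter isClosed_closedBall).inter isClosed_closedBall).measurableSet.nullMeasurableSet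
  have hm3 : NullMeasurableSet (S3 ρ) (μH[1]) :=
    ((isClosed_sphere.inter isClosed_closedBall).inter isClosed_closedBall).measurableSet.nullMeasurableSet
  have hd12 : μH[1] (S1 ρ ∩ S2 ρ) = 0 := by
    apply measure_mono_null (?_ : S1 ρ ∩ S2 ρ ⊆ sphere (0:ℂ) ρ ∩ sphere (1:ℂ) ρ) null_inter_12
    rintro x ⟨⟨⟨h1, _⟩, _⟩, ⟨⟨h2, _⟩, _⟩⟩
    exact ⟨h1, h2⟩
  have hd13 : μH[1] (S1 ρ ∩ S3 ρ) = 0 := by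
    apply measure_mono_null (?_ : S1 ρ ∩ S3 ρ ⊆ sphere zC ρ ∩ sphere (0:ℂ) ρ) null_inter_31
    rintro x ⟨⟨⟨h1, _⟩, _⟩, ⟨⟨h2, _⟩, _⟩⟩
    exact ⟨h2, h1⟩
  have hd23 : μH[1] (S2 ρ ∩ S3 ρ) = 0 := by
    apply measure_mono_null (?_ : S2 ρ ∩ S3 ρ ⊆ sphere (1:ℂ) ρ ∩ sphere zC ρ) null_inter_23
    rintro x ⟨⟨⟨h1, _⟩, _⟩, ⟨⟨h2, _⟩, _⟩⟩
    exact ⟨h1, h2⟩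
  rw [measure_union₀ hm3, measure_union₀ hm1]
  · exact hd12
  · rw [AEDisjoint]
    apply measure_mono_null (?_ : (S1 ρ ∪ S2 ρ) ∩ S3 ρ ⊆ (S1 ρ ∩ S3 ρ) ∪ (S2 ρ ∩ S3 ρ)) ?_
    · rintro x ⟨h1 | h1, h2⟩
      · exact Or.inl ⟨h1, h2⟩
      · exact Or.inr ⟨h1, h2⟩
    · exact measure_union_null hd13 hd23
end main


-- main ℂ-side computation
lemma measure_S1 {ρ : ℝ} (hρ : Real.sqrt 3 / 3 ≤ ρ) :
    μH[1] (S1 ρ) = ENNReal.ofReal (ρ * (2 * cAng ρ - π/3)) := by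
  have h0 := rho_pos hρ
  have hc6 := cAng_ge hρ
  have hc2 := cAng_lt_half_pi hρ
  have hpi := Real.pi_pos
  rw [S1, arcA hρ, arc_measure 0 h0 (by linarith) (by linarith)]
  congr 1
  ring

lemma main_c {ρ : ℝ} (hρ : Real.sqrt 3 / 3 ≤ ρ) :
    μH[1] (frontier (Kc ρ)) = ENNReal.ofReal (ρ * (6 * cAng ρ - π)) := by
  have h0 := rho_pos hρ
  have hc6 := cAng_ge hρ
  have hc2 := cAng_lt_half_pi hρ
  have hpi := Real.pi_pos
  have hS1 := measure_S1 hρ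
  have hS2 : μH[1] (S2 ρ) = μH[1] (S1 ρ) := by
    rw [← rot_S1, rot.hausdorffMeasure_image]
  have hS3 : μH[1] (S3 ρ) = μH[1] (S1 ρ) := by
    rw [← rot_S2, rot.hausdorffMeasure_image, hS2]
  rw [frontier_Kc h0, measure_union_S h0, hS2, hS3, hS1,
    ← ENNReal.ofReal_add (by nlinarith) (by nlinarith),
    ← ENNReal.ofReal_add (by nlinarith) (by nlinarith)]
  congr 1
  ring

-- the arcsin identity
lemma arcsin_eq {ρ : ℝ} (hρ : Real.sqrt 3 / 3 ≤ ρ) :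
    Real.arcsin (((Real.cos (π/6) - Real.sqrt (ρ^2 - Real.sin (π/6)^2)) * Real.sin (π/6)) / ρ)
      = π/3 - cAng ρ := by
  have h0 := rho_pos hρ
  have hhalf := rho_half hρ
  have hc6 := cAng_ge hρ
  have hc2 := cAng_lt_half_pi hρ
  have hpi := Real.pi_pos
  have hsq : (0:ℝ) ≤ ρ^2 - 1/4 := by nlinarith
  have hkey : Real.sqrt (1 - (1/(2*ρ))^2) = Real.sqrt (ρ^2 - 1/4) / ρ := by
    have h1 : 1 - (1/(2*ρ))^2 = (ρ^2 - 1/4) / ρ^2 := by field_simp; ring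
    rw [h1, Real.sqrt_div hsq, Real.sqrt_sq h0.le]
  have hX : ((Real.cos (π/6) - Real.sqrt (ρ^2 - Real.sin (π/6)^2)) * Real.sin (π/6)) / ρ
      = Real.sin (π/3 - cAng ρ) := by
    rw [Real.cos_pi_div_six, Real.sin_pi_div_six, Real.sin_sub, Real.sin_pi_div_three,
      Real.cos_pi_div_three, cos_cAng hρ, cAng, Real.sin_arccos, hkey]
    have : ρ^2 - (1/2)^2 = ρ^2 - 1/4 := by norm_num
    rw [this]
    field_simp
  rw [hX, Real.arcsin_sin (by linarith) (by linarith)]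

-- Plane-side lemmas
lemma innerParallel_inter (A B : Set Plane) (t : ℝ) :
    innerParallel (A ∩ B) t = innerParallel A t ∩ innerParallel B t := by
  ext x
  simp only [innerParallel, mem_setOf_eq, mem_inter_iff, subset_inter_iff]

lemma innerParallel_closedBall (z : Plane) {r t : ℝ} (h0 : 0 ≤ t) (htr : t ≤ r) :
    innerParallel (closedBall z r) t = closedBall z (r - t) := by
  ext x
  simp only [innerParallel, mem_setOf_eq, mem_closedBall]
  constructor
  · intro h
    rcases eq_or_ne x z with rfl | hxz
    · rw [dist_self]; linarith
    · by_contra hlt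
      push_neg at hlt
      have hn : 0 < ‖x - z‖ := by
        rw [norm_sub_pos_iff]; exact hxz
      set y : Plane := x + (t / ‖x - z‖) • (x - z) with hy
      have hyx : dist y x = t := by
        rw [dist_eq_norm, hy]
        simp only [add_sub_cancel_left]
        rw [norm_smul, Real.norm_eq_abs, abs_div, abs_of_nonneg h0, abs_norm,
          div_mul_cancel₀ _ hn.ne']
      have hyz : dist y z = ‖x - z‖ + t := by
        rw [dist_eq_norm]
        have hyzeq : y - z = (1 + t / ‖x - z‖) • (x - z) := by
          rw [hy, add_smul, one_smul]; abel
        rw [hyzeq, norm_smul, Real.norm_eq_abs, abs_of_pos (by positivity)]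
        field_simp
      have hmem : y ∈ closedBall x t := by rw [mem_closedBall, hyx]
      have := h hmem
      rw [mem_closedBall, hyz] at this
      rw [dist_eq_norm] at hlt
      linarith
  · intro h w hw
    rw [mem_closedBall] at hw
    calc dist w z ≤ dist w x + dist x z := dist_triangle w x z
      _ ≤ t + (r - t) := add_le_add hw h
      _ = r := by ring

lemma eC_image_Kc (ρ : ℝ) :
    eC '' Kc ρ = closedBall (pt 0 0) ρ ∩ closedBall (pt 1 0) ρ ∩
      closedBall (pt (1/2) (Real.sqrt 3 / 2)) ρ := by
  rw [Kc, Set.image_inter eC.injective, Set.image_inter eC.injective,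
    eC.image_closedBall, eC.image_closedBall, eC.image_closedBall]
  have h0 : eC 0 = pt 0 0 := by simp [eC_apply]
  have h1 : eC 1 = pt 1 0 := by simp [eC_apply]
  have hz : eC zC = pt (1/2) (Real.sqrt 3 / 2) := by simp [eC_apply, zC]
  rw [h0, h1, hz]

end ReuleauxProof

/-- The perimeter of the inner parallel set of the Reuleaux triangle at distance
`t ∈ [0, 1 − √3/3]` equals `(1 − t)(π − 6 α_t(π/6))`, where
`α_t(γ) = arcsin(h_t(γ)/(1−t))` and `h_t(γ) = (cos γ − √((1−t)² − sin²γ)) · sin γ`. -/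
theorem perimeter_innerParallel_reuleaux (t : ℝ)
    (ht : t ∈ Set.Icc 0 (1 - Real.sqrt 3 / 3)) :
    μH[1] (frontier (innerParallel ReuleauxTriangle t)) =
      ENNReal.ofReal ((1 - t) * (π - 6 * Real.arcsin
        (((Real.cos (π / 6) - Real.sqrt ((1 - t) ^ 2 - Real.sin (π / 6) ^ 2)) *
          Real.sin (π / 6)) / (1 - t)))) := by
  obtain ⟨ht0, ht1⟩ := ht
  have hs3 : (0:ℝ) < Real.sqrt 3 := sqrt3_pos
  set ρ : ℝ := 1 - t with hρdef
  have hρ : Real.sqrt 3 / 3 ≤ ρ := by rw [hρdef]; linarith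
  have ht1' : t ≤ 1 := by nlinarith
  have hIP : innerParallel ReuleauxTriangle t = eC '' Kc ρ := by
    rw [ReuleauxTriangle, innerParallel_inter, innerParallel_inter,
      innerParallel_closedBall _ ht0 ht1', innerParallel_closedBall _ ht0 ht1',
      innerParallel_closedBall _ ht0 ht1', eC_image_Kc]
  have hfr : frontier (eC '' Kc ρ) = eC '' frontier (Kc ρ) :=
    (eC.toHomeomorph.image_frontier (Kc ρ)).symm
  rw [hIP, hfr, eC.hausdorffMeasure_image, main_c hρ]
  congr 1
  have harc := arcsin_eq hρ
  rw [show ((1:ℝ) - t) ^ 2 = ρ^2 by rw [hρdef], harc]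
  ring
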